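/- If A is symmetric positive definite, C is symmetric positive semidefinite, and ker(C) ∩ ker(B^T) = {0}, then the saddle point matrix [[A, B^T], [B, −C]] is nonsingular. -/

import Mathlib

open Matrix
theorem saddle_point_matrix_nonsingular (n m : ℕ)
    (A : Matrix (Fin n) (Fin n) ℝ) (hA : A.PosDef)
    (C : Matrix (Fin m) (Fin m) ℝ) (hC : C.PosSemidef)
    (B : Matrix (Fin m) (Fin n) ℝ)
    (hker : ∀ x : Fin m → ℝ, C.mulVec x = 0 → Bᵀ.mulVec x = 0 → x = 0) :
    (Matrix.fromBlocks A Bᵀ B (-C)).det ≠ 0 := by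
  intro hdet
  obtain ⟨v, hv, hMv⟩ := Matrix.exists_mulVec_eq_zero_iff.mpr hdet
  set x : Fin n → ℝ := v ∘ Sum.inl with hx
  set y : Fin m → ℝ := v ∘ Sum.inr with hy
  have hvdef : v = Sum.elim x y := by funext i; cases i <;> rfl
  rw [hvdef, Matrix.fromBlocks_mulVec] at hMv
  have h1 : A *ᵥ x + Bᵀ *ᵥ y = 0 := by
    funext i; exact congrFun (congrArg (· ∘ Sum.inl) hMv) i
  have h2 : B *ᵥ x + (-C) *ᵥ y = 0 := by
    funext i; exact congrFun (congrArg (· ∘ Sum.inr) hMv) i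
  have hBx : B *ᵥ x = C *ᵥ y := by
    rw [neg_mulVec] at h2
    exact add_neg_eq_zero.mp h2
  -- x ⬝ᵥ A x = - x ⬝ᵥ Bᵀ y = - (B x) ⬝ᵥ y = - (C y) ⬝ᵥ y ≤ 0
  have key : x ⬝ᵥ A *ᵥ x = - (y ⬝ᵥ C *ᵥ y) := by
    have := congrArg (fun w => x ⬝ᵥ w) h1
    simp only [dotProduct_add, dotProduct_zero] at this
    have h3 : x ⬝ᵥ Bᵀ *ᵥ y = y ⬝ᵥ C *ᵥ y := by
      rw [dotProduct_mulVec, vecMul_transpose, hBx, dotProduct_comm]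
    linarith
  have hyC : 0 ≤ y ⬝ᵥ C *ᵥ y := by simpa using hC.dotProduct_mulVec_nonneg y
  have hxA : 0 ≤ x ⬝ᵥ A *ᵥ x := by simpa using hA.posSemidef.dotProduct_mulVec_nonneg x
  have hx0 : x = 0 := by
    by_contra hx0
    have := hA.dotProduct_mulVec_pos hx0
    simp only [RCLike.star_def, star_trivial] at this
    rw [key] at this
    · linarith [hC.dotProduct_mulVec_nonneg y, show (0:ℝ) ≤ y ⬝ᵥ C *ᵥ y by simpa using hC.dotProduct_mulVec_nonneg y]
  have hCy0 : C *ᵥ y = 0 := by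
    have hzero : y ⬝ᵥ C *ᵥ y = 0 := by
      rw [hx0] at key; simpa using key.symm
    have := (hC.dotProduct_mulVec_zero_iff y).mp (by simpa using hzero)
    exact this
  have hBty0 : Bᵀ *ᵥ y = 0 := by
    rw [hx0, mulVec_zero, zero_add] at h1; exact h1
  have hy0 : y = 0 := hker y hCy0 hBty0
  apply hv
  rw [hvdef, hx0, hy0]
  funext i; cases i <;> rfl
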